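/- arXiv:2305.08362 — 5 statements merged into one kernel-verified Lean document; each statement's English description precedes it below -/
import Mathlib

section
/- Let m > 0 and f(r) = (1 - 2m/r)/r² for r > 2m, and for b > 3√3·m let r_p(b) be the unique root of f(r) = 1/b² in (3m, ∞). Then r_p(b)/b → 1 as b → ∞; that is, for large impact parameter the periastron radius is asymptotically equal to the impact parameter, corresponding to an almost straight-line orbit. -/
open Filter

/-- For large impact parameter the periastron radius is asymptotically equal to
the impact parameter: `r_p(b)/b → 1` as `b → ∞` (almost straight-line orbits). -/
theorem schwarzschild_periastron_asymptotic
    (m : ℝ) (hm : 0 < m) (f : ℝ → ℝ)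
    (hf : ∀ r : ℝ, f r = (1 - 2 * m / r) / r ^ 2)
    (rp : ℝ → ℝ)
    (hrp : ∀ b : ℝ, 3 * Real.sqrt 3 * m < b →
      rp b ∈ Set.Ioi (3 * m) ∧ f (rp b) = 1 / b ^ 2) :
    Tendsto (fun b : ℝ => rp b / b) atTop (nhds 1) := by
  have h3m : 0 < 3 * Real.sqrt 3 * m := by positivity
  have key : ∀ b : ℝ, 3 * Real.sqrt 3 * m < b →
      1 - 6 * m / b ≤ rp b / b ∧ rp b / b ≤ 1 := by
    intro b hb
    obtain ⟨hr, heq⟩ := hrp b hb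
    have hb0 : 0 < b := h3m.trans hb
    set r := rp b with hrdef
    have hr3 : 3 * m < r := hr
    have hr0 : 0 < r := by linarith
    have hkey : b ^ 2 * (r - 2 * m) = r ^ 3 := by
      rw [hf r] at heq
      field_simp at heq
      nlinarith [heq]
    have keq : r * (b - r) * (b + r) = 2 * m * b ^ 2 := by
      linear_combination hkey
    have hrb : r < b := by
      by_contra h
      push_neg at h
      nlinarith [mul_pos hm (mul_pos hb0 hb0), mul_nonneg (mul_nonneg hr0.le (sub_nonneg.mpr h)) (by linarith : (0:ℝ) ≤ b + r)]
    have hb2 : b ^ 2 < 3 * r ^ 2 := by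
      nlinarith [keq, mul_pos hr0 hb0, mul_lt_mul_of_pos_right hr3 (mul_pos hb0 hb0), mul_pos hr0 hr0]
    have hb3r : b ≤ 3 * r := by
      nlinarith [hb2, mul_pos hr0 hr0, mul_pos hr0 hb0]
    have hfin : b - r ≤ 6 * m := by
      nlinarith [keq, mul_pos hb0 hb0,
        mul_nonneg (by linarith : (0:ℝ) ≤ 3 * r - b)
          (mul_nonneg (by linarith : (0:ℝ) ≤ b - r) (by linarith : (0:ℝ) ≤ b + r)),
        mul_pos hr0 hb0]
    constructor
    · have h1 : 1 - 6 * m / b = (b - 6 * m) / b := by field_simp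
      rw [h1]
      gcongr
      linarith
    · exact (div_le_one hb0).mpr hrb.le
  have hlow : Tendsto (fun b : ℝ => 1 - 6 * m / b) atTop (nhds 1) := by
    have h0 : Tendsto (fun b : ℝ => 6 * m / b) atTop (nhds 0) :=
      Tendsto.div_atTop tendsto_const_nhds tendsto_id
    simpa using tendsto_const_nhds.sub h0
  apply tendsto_of_tendsto_of_tendsto_of_le_of_le' hlow tendsto_const_nhds
  · filter_upwards [eventually_gt_atTop (3 * Real.sqrt 3 * m)] with b hb
    exact (key b hb).1
  · filter_upwards [eventually_gt_atTop (3 * Real.sqrt 3 * m)] with b hb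
    exact (key b hb).2
end

section
/- Let m > 0 and f(r) = (1 - 2m/r)/r² for r > 2m, and let b > 3√3·m with periastron r_p(b) (the unique root of f(r) = 1/b² in (3m, ∞)). Then the function r ↦ 1/(r² · √(1/b² - f(r))) is integrable on the interval (r_p(b), ∞); in particular the total azimuthal angle Δφ(b) = 2∫_{r_p(b)}^{∞} dr/(r² √(1/b² - f(r))) swept by a scattering null geodesic with impact parameter b is finite. -/
open MeasureTheory

/-- For `b > 3√3·m` with periastron `r_p` (the unique root of `f(r) = 1/b²` in
`(3m, ∞)`), the integrand `1/(r² √(1/b² - f(r)))` is integrable on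
`(r_p, ∞)`; in particular the total azimuthal angle
`Δφ(b) = 2∫_{r_p}^{∞} dr/(r² √(1/b² - f(r)))` of a scattering orbit is finite. -/
theorem schwarzschild_azimuthal_angle_finite
    (m : ℝ) (hm : 0 < m) (f : ℝ → ℝ)
    (hf : ∀ r : ℝ, f r = (1 - 2 * m / r) / r ^ 2)
    (b : ℝ) (hb : 3 * Real.sqrt 3 * m < b)
    (rp : ℝ) (hrp : rp ∈ Set.Ioi (3 * m)) (hroot : f rp = 1 / b ^ 2) :
    IntegrableOn (fun r : ℝ => 1 / (r ^ 2 * Real.sqrt (1 / b ^ 2 - f r)))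
      (Set.Ioi rp) volume := by
  have hrp3 : 3 * m < rp := hrp
  have hrp0 : 0 < rp := by linarith
  have hb0 : 0 < b := lt_trans (by positivity) hb
  set R : ℝ := rp + b * Real.sqrt 2 with hRdef
  have hbs2 : 0 < b * Real.sqrt 2 := by positivity
  have hRrp : rp < R := by simp only [hRdef]; linarith
  have hR0 : 0 < R := lt_trans hrp0 hRrp
  -- key identity
  have hkey : ∀ r : ℝ, 0 < r → 1 / b ^ 2 - f r
      = (r - rp) * (r * rp * (r + rp) - 2*m*(r^2 + r*rp + rp^2)) / (r^3 * rp^3) := by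
    intro r hr
    rw [← hroot, hf, hf]
    field_simp
    ring
  -- measurability
  have hfeq : f = fun r => (1 - 2 * m / r) / r ^ 2 := funext hf
  have hmeas : Measurable (fun r : ℝ => 1 / (r ^ 2 * Real.sqrt (1 / b ^ 2 - f r))) := by
    rw [hfeq]; fun_prop
  -- lower bound near the periastron
  set c : ℝ := 2 * (rp - 3*m) / (R^3 * rp) with hcdef
  have hc : 0 < c := div_pos (by linarith) (by positivity)
  have hlow : ∀ r ∈ Set.Ioc rp R, (r - rp) * c ≤ 1 / b ^ 2 - f r := by
    rintro r ⟨hr1, hr2⟩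
    have hr0 : 0 < r := lt_trans hrp0 hr1
    rw [hkey r hr0, hcdef, ← mul_div_assoc,
      div_le_div_iff₀ (by positivity) (by positivity)]
    have hA : r^3 ≤ R^3 := pow_le_pow_left₀ hr0.le hr2 3
    have hh : 2*rp^2*(rp-3*m) ≤ r*rp*(r+rp) - 2*m*(r^2 + r*rp + rp^2) := by
      nlinarith [mul_nonneg (mul_nonneg (sub_nonneg.2 hr1.le)
        (by linarith : (0:ℝ) ≤ r + 2*rp)) (by linarith : (0:ℝ) ≤ rp - 2*m)]
    have hnn : (0:ℝ) ≤ (r - rp) * rp * (2*rp^2*(rp-3*m)) :=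
      mul_nonneg (mul_nonneg (by linarith) hrp0.le)
        (mul_nonneg (by positivity) (by linarith))
    have hnn2 : (0:ℝ) ≤ (r - rp) * rp * R^3 :=
      mul_nonneg (mul_nonneg (by linarith) hrp0.le) (by positivity)
    calc (r - rp) * (2 * (rp - 3*m)) * (r^3 * rp^3)
        = ((r - rp) * rp * (2*rp^2*(rp-3*m))) * r^3 := by ring
      _ ≤ ((r - rp) * rp * (2*rp^2*(rp-3*m))) * R^3 := mul_le_mul_of_nonneg_left hA hnn
      _ = (2*rp^2*(rp-3*m)) * ((r - rp) * rp * R^3) := by ring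
      _ ≤ (r*rp*(r+rp) - 2*m*(r^2 + r*rp + rp^2)) * ((r - rp) * rp * R^3) :=
          mul_le_mul_of_nonneg_right hh hnn2
      _ = (r - rp) * (r*rp*(r+rp) - 2*m*(r^2 + r*rp + rp^2)) * (R^3 * rp) := by ring
  -- integrability on Ioc rp R
  set C : ℝ := 1 / (rp^2 * Real.sqrt c) with hCdef
  have hIoc : IntegrableOn (fun r : ℝ => 1 / (r ^ 2 * Real.sqrt (1 / b ^ 2 - f r)))
      (Set.Ioc rp R) volume := by
    have hii : IntervalIntegrable (fun x : ℝ => x ^ (-(1/2) : ℝ)) volume 0 (R - rp) :=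
      intervalIntegral.intervalIntegrable_rpow' (by norm_num)
    have hii2 : IntervalIntegrable (fun x : ℝ => (x - rp) ^ (-(1/2) : ℝ)) volume rp R := by
      simpa using hii.comp_sub_right rp
    have hbd : IntegrableOn (fun x : ℝ => C * (x - rp) ^ (-(1/2) : ℝ)) (Set.Ioc rp R) volume :=
      (intervalIntegrable_iff_integrableOn_Ioc_of_le hRrp.le).1 (hii2.const_mul C)
    refine hbd.mono' hmeas.aestronglyMeasurable ?_
    refine (ae_restrict_iff' measurableSet_Ioc).2 (ae_of_all _ ?_)
    rintro r ⟨hr1, hr2⟩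
    have hr0 : 0 < r := lt_trans hrp0 hr1
    have hrr : 0 < r - rp := by linarith
    have hg : (r - rp) * c ≤ 1 / b ^ 2 - f r := hlow r ⟨hr1, hr2⟩
    have hsq : Real.sqrt (r - rp) * Real.sqrt c ≤ Real.sqrt (1 / b ^ 2 - f r) := by
      rw [← Real.sqrt_mul hrr.le]
      exact Real.sqrt_le_sqrt hg
    have hpos : 0 < rp ^ 2 * (Real.sqrt (r - rp) * Real.sqrt c) := by positivity
    have heq : C * (r - rp) ^ (-(1/2) : ℝ)
        = 1 / (rp ^ 2 * (Real.sqrt (r - rp) * Real.sqrt c)) := by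
      rw [Real.rpow_neg hrr.le, ← Real.sqrt_eq_rpow, hCdef]
      field_simp
    rw [Real.norm_eq_abs, abs_of_nonneg (by positivity), heq]
    apply one_div_le_one_div_of_le hpos
    exact mul_le_mul (by nlinarith) hsq (by positivity) (by positivity)
  -- integrability on Ioi R
  have hIoi : IntegrableOn (fun r : ℝ => 1 / (r ^ 2 * Real.sqrt (1 / b ^ 2 - f r)))
      (Set.Ioi R) volume := by
    set K : ℝ := Real.sqrt (1 / (2 * b ^ 2)) with hKdef
    have hK : 0 < K := Real.sqrt_pos.2 (by positivity)
    have hbd : IntegrableOn (fun r : ℝ => (1 / K) * r ^ (-2 : ℝ)) (Set.Ioi R) volume :=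
      (integrableOn_Ioi_rpow_of_lt (by norm_num) hR0).const_mul _
    refine hbd.mono' hmeas.aestronglyMeasurable ?_
    refine (ae_restrict_iff' measurableSet_Ioi).2 (ae_of_all _ ?_)
    intro r hr
    have hrR : R < r := hr
    have hr0 : 0 < r := lt_trans hR0 hrR
    have h2m : 0 < 2 * m / r := by positivity
    have hfr : f r < 1 / r ^ 2 := by
      rw [hf r, div_lt_div_iff_of_pos_right (by positivity)]
      linarith
    have hs2 : Real.sqrt 2 ^ 2 = 2 := Real.sq_sqrt (by norm_num)
    have hr2 : 2 * b ^ 2 ≤ r ^ 2 := by nlinarith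
    have hrr2 : 1 / r ^ 2 ≤ 1 / (2 * b ^ 2) :=
      one_div_le_one_div_of_le (by positivity) hr2
    have hglb : 1 / (2 * b ^ 2) ≤ 1 / b ^ 2 - f r := by
      have : 1 / (2 * b ^ 2) + 1 / (2 * b ^ 2) = 1 / b ^ 2 := by field_simp; ring
      linarith
    have hKle : K ≤ Real.sqrt (1 / b ^ 2 - f r) := by
      rw [hKdef]; exact Real.sqrt_le_sqrt hglb
    have heq2 : (1 / K) * r ^ (-2 : ℝ) = 1 / (r ^ 2 * K) := by
      rw [Real.rpow_neg hr0.le, show ((2:ℝ)) = ((2:ℕ):ℝ) by norm_num,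
        Real.rpow_natCast]
      field_simp
    rw [Real.norm_eq_abs, abs_of_nonneg (by positivity), heq2]
    apply one_div_le_one_div_of_le (by positivity)
    exact mul_le_mul_of_nonneg_left hKle (by positivity)
  have := hIoc.union hIoi
  rwa [Set.Ioc_union_Ioi_eq_Ioi hRrp.le] at this
end

section
/- Let m > 0 and f(r) = (1 - 2m/r)/r² for r > 2m, and for b > 3√3·m define the total azimuthal angle Δφ(b) = 2∫_{r_p(b)}^{∞} dr/(r² √(1/b² - f(r))), where r_p(b) is the unique root of f(r) = 1/b² in (3m, ∞). Then lim_{b → ∞} b·(Δφ(b) - π) = 4m; that is, for impact parameter b ≫ 3√3·m the orbit is an almost straight line with deflection angle asymptotic to 4m/b. -/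
open Filter MeasureTheory

section SchwarzschildAux
open Real Set

noncomputable def hAux (θ : ℝ) : ℝ := 1 + Real.sin θ ^ 2 / (1 + Real.sin θ)

lemma hAux_bounds {θ : ℝ} (h1 : 0 ≤ θ) (h2 : θ ≤ π/2) : 1 ≤ hAux θ ∧ hAux θ ≤ 3/2 := by
  have hs0 : 0 ≤ Real.sin θ := Real.sin_nonneg_of_nonneg_of_le_pi h1 (by linarith [Real.pi_pos])
  have hs1 : Real.sin θ ≤ 1 := Real.sin_le_one θ
  have hd : (0:ℝ) < 1 + Real.sin θ := by linarith
  constructor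
  · have : 0 ≤ Real.sin θ ^ 2 / (1 + Real.sin θ) := by positivity
    simp [hAux]; linarith
  · have : Real.sin θ ^ 2 / (1 + Real.sin θ) ≤ 1/2 := by
      rw [div_le_iff₀ hd]; nlinarith
    simp [hAux]; linarith

lemma hAux_contOn : ContinuousOn hAux (Icc 0 (π/2)) := by
  apply ContinuousOn.add continuousOn_const
  apply ContinuousOn.div (by fun_prop) (by fun_prop)
  intro θ hθ
  have hs0 : 0 ≤ Real.sin θ := Real.sin_nonneg_of_nonneg_of_le_pi hθ.1 (by
    have := Real.pi_pos; linarith [hθ.2])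
  positivity

lemma hAux_hasDeriv {θ : ℝ} (h1 : 0 ≤ θ) (h2 : θ ≤ π/2) :
    HasDerivAt (fun t => -(Real.cos t / (1 + Real.sin t)) - Real.cos t) (hAux θ) θ := by
  have hs0 : 0 ≤ Real.sin θ := Real.sin_nonneg_of_nonneg_of_le_pi h1 (by linarith [Real.pi_pos])
  have hd : (1:ℝ) + Real.sin θ ≠ 0 := by positivity
  have h1' : HasDerivAt (fun t => Real.cos t / (1 + Real.sin t))
      ((-Real.sin θ * (1 + Real.sin θ) - Real.cos θ * (0 + Real.cos θ)) / (1 + Real.sin θ)^2) θ := by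
    exact ((Real.hasDerivAt_cos θ).div ((hasDerivAt_const θ 1).add (Real.hasDerivAt_sin θ)) hd)
  have := (h1'.neg).sub (Real.hasDerivAt_cos θ)
  refine this.congr_deriv ?_
  have hpyth := Real.sin_sq_add_cos_sq θ
  rw [show Real.cos θ * (0 + Real.cos θ) = 1 - Real.sin θ ^ 2 by linear_combination hpyth]
  unfold hAux
  field_simp
  ring

lemma hAux_integral : ∫ θ in Ioo 0 (π/2), hAux θ = 2 := by
  have hle : (0:ℝ) ≤ π/2 := by positivity
  rw [← MeasureTheory.integral_Ioc_eq_integral_Ioo, ← intervalIntegral.integral_of_le hle]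
  rw [intervalIntegral.integral_eq_sub_of_hasDerivAt (f := fun t => -(Real.cos t / (1 + Real.sin t)) - Real.cos t)]
  · simp [Real.cos_pi_div_two, Real.sin_pi_div_two]; norm_num
  · intro x hx
    rw [Set.uIcc_of_le hle] at hx
    exact hAux_hasDeriv hx.1 hx.2
  · apply ContinuousOn.intervalIntegrable
    rw [Set.uIcc_of_le hle]
    exact hAux_contOn

lemma keyX (m ρ b s c : ℝ) (hm : 0 < m) (hρ : 3*m < ρ) (hs : 0 < s) (hs1 : s ≤ 1)
    (hc : 0 < c) (hpy : c^2 = 1 - s^2)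
    (hfρ : (1 - 2*m/ρ)/ρ^2 = 1/b^2) :
    1/b^2 - (1 - 2*m/(ρ/s))/(ρ/s)^2 = (c/ρ)^2 * (1 - (2*m/ρ)*(1 + s^2/(1+s))) := by
  have hρ0 : (0:ℝ) < ρ := by linarith
  have h1s : (0:ℝ) < 1 + s := by linarith
  rw [← hfρ, div_pow c ρ 2, hpy]
  field_simp
  ring

lemma keyPos (m ρ s : ℝ) (hm : 0 < m) (hρ : 3*m < ρ) (hs : 0 ≤ s) (hs1 : s ≤ 1) :
    0 < 1 - (2*m/ρ)*(1 + s^2/(1+s)) := by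
  have hρ0 : (0:ℝ) < ρ := by linarith
  have h1s : (0:ℝ) < 1 + s := by linarith
  have h1 : s^2/(1+s) ≤ 1/2 := by rw [div_le_iff₀ h1s]; nlinarith
  have h2 : (2*m/ρ)*(1 + s^2/(1+s)) ≤ (2*m/ρ)*(3/2) := by
    apply mul_le_mul_of_nonneg_left (by linarith) (by positivity)
  have h3 : (2*m/ρ)*(3/2) = 3*m/ρ := by ring
  have h4 : 3*m/ρ < 1 := (div_lt_one hρ0).2 hρ
  linarith

lemma keyPt (m ρ b s c : ℝ) (hm : 0 < m) (hρ : 3*m < ρ) (hs : 0 < s) (hs1 : s ≤ 1)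
    (hc : 0 < c) (hpy : c^2 = 1 - s^2)
    (hfρ : (1 - 2*m/ρ)/ρ^2 = 1/b^2) :
    |(0 * s - ρ * c) / s^2| * (1/((ρ/s)^2 * Real.sqrt (1/b^2 - (1 - 2*m/(ρ/s))/(ρ/s)^2)))
      = 1/Real.sqrt (1 - (2*m/ρ)*(1 + s^2/(1+s))) := by
  have hρ0 : (0:ℝ) < ρ := by linarith
  have hX := keyX m ρ b s c hm hρ hs hs1 hc hpy hfρ
  have hXpos := keyPos m ρ s hm hρ hs.le hs1
  rw [hX, Real.sqrt_mul (sq_nonneg _), Real.sqrt_sq (by positivity : (0:ℝ) ≤ c/ρ)]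
  have habs : |(0 * s - ρ * c) / s^2| = ρ * c / s^2 := by
    rw [abs_div, abs_of_pos (by positivity : (0:ℝ) < s^2)]
    rw [zero_mul, zero_sub, abs_neg, abs_of_pos (by positivity)]
  rw [habs]
  have hsq : (0:ℝ) < Real.sqrt (1 - (2*m/ρ)*(1 + s^2/(1+s))) := Real.sqrt_pos.2 hXpos
  set K := Real.sqrt (1 - (2*m/ρ)*(1 + s^2/(1+s))) with hK
  have hstep : (ρ/s)^2 * (c/ρ * K) = (ρ * c / s^2) * K := by
    field_simp
  rw [hstep, one_div, mul_inv, ← mul_assoc, mul_inv_cancel₀ (by positivity), one_mul, one_div]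


lemma mem_sin {θ : ℝ} (hθ : θ ∈ Ioo 0 (π/2)) :
    0 < Real.sin θ ∧ Real.sin θ ≤ 1 ∧ 0 < Real.cos θ := by
  have hπ := Real.pi_pos
  refine ⟨Real.sin_pos_of_pos_of_lt_pi hθ.1 (by linarith [hθ.2]), Real.sin_le_one θ,
    Real.cos_pos_of_mem_Ioo ⟨by linarith [hθ.1], hθ.2⟩⟩

lemma subst_img (ρ : ℝ) (hρ0 : 0 < ρ) :
    (fun θ : ℝ => ρ / Real.sin θ) '' Ioo 0 (π/2) = Ioi ρ := by
  ext r
  constructor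
  · rintro ⟨θ, hθ, rfl⟩
    obtain ⟨hs, _, _⟩ := mem_sin hθ
    have hlt : Real.sin θ < 1 := by
      have := Real.strictMonoOn_sin
        (Set.mem_Icc.2 ⟨by linarith [hθ.1, Real.pi_pos], hθ.2.le⟩)
        (Set.mem_Icc.2 ⟨by linarith [Real.pi_pos], le_refl _⟩) hθ.2
      simpa using this
    have : ρ < ρ / Real.sin θ := by
      rw [lt_div_iff₀ hs]; nlinarith
    exact this
  · intro hr
    have hr' : ρ < r := hr
    have hr0 : 0 < r := lt_trans hρ0 hr'
    have h01 : ρ / r ∈ Ioo (0:ℝ) 1 := ⟨by positivity, (div_lt_one hr0).2 hr'⟩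
    refine ⟨Real.arcsin (ρ / r), ⟨Real.arcsin_pos.2 h01.1, Real.arcsin_lt_pi_div_two.2 h01.2⟩, ?_⟩
    show ρ / Real.sin (Real.arcsin (ρ / r)) = r
    rw [Real.sin_arcsin (by linarith [h01.1]) h01.2.le]
    field_simp

lemma subst_inj (ρ : ℝ) (hρ0 : 0 < ρ) :
    InjOn (fun θ : ℝ => ρ / Real.sin θ) (Ioo 0 (π/2)) := by
  have : StrictAntiOn (fun θ : ℝ => ρ / Real.sin θ) (Ioo 0 (π/2)) := by
    intro a ha b hb hab
    have hπ := Real.pi_pos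
    have hsa := (mem_sin ha).1
    have hmono := Real.strictMonoOn_sin
      (Set.mem_Icc.2 ⟨by linarith [ha.1], by linarith [ha.2]⟩)
      (Set.mem_Icc.2 ⟨by linarith [hb.1], by linarith [hb.2]⟩) hab
    exact div_lt_div_of_pos_left hρ0 hsa hmono
  exact this.injOn

lemma subst_integral (m b ρ : ℝ) (hm : 0 < m) (hρ : 3*m < ρ)
    (hfρ : (1 - 2*m/ρ)/ρ^2 = 1/b^2) :
    (∫ r in Ioi ρ, 1/(r^2 * Real.sqrt (1/b^2 - (1 - 2*m/r)/r^2)))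
      = ∫ θ in Ioo 0 (π/2), 1/Real.sqrt (1 - (2*m/ρ) * hAux θ) := by
  have hρ0 : (0:ℝ) < ρ := by linarith
  have hderiv : ∀ θ ∈ Ioo 0 (π/2), HasDerivWithinAt (fun θ : ℝ => ρ / Real.sin θ)
      ((0 * Real.sin θ - ρ * Real.cos θ) / Real.sin θ ^ 2) (Ioo 0 (π/2)) θ := by
    intro θ hθ
    obtain ⟨hs, _, _⟩ := mem_sin hθ
    exact (((hasDerivAt_const θ ρ).div (Real.hasDerivAt_sin θ) (ne_of_gt hs))).hasDerivWithinAt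
  rw [← subst_img ρ hρ0,
    MeasureTheory.integral_image_eq_integral_abs_deriv_smul measurableSet_Ioo hderiv
      (subst_inj ρ hρ0)]
  apply MeasureTheory.setIntegral_congr_fun measurableSet_Ioo
  intro θ hθ
  obtain ⟨hs, hs1, hc⟩ := mem_sin hθ
  have hpy : Real.cos θ ^ 2 = 1 - Real.sin θ ^ 2 := by
    nlinarith [Real.sin_sq_add_cos_sq θ]
  have := keyPt m ρ b (Real.sin θ) (Real.cos θ) hm hρ hs hs1 hc hpy hfρ
  simpa [hAux, smul_eq_mul] using this

lemma slope_lim (c : ℝ) :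
    Tendsto (fun x : ℝ => (1/Real.sqrt (1 - x*c) - 1)/x) (nhdsWithin 0 {0}ᶜ) (nhds (c/2)) := by
  have hinner : HasDerivAt (fun x : ℝ => 1 - x*c) (-c) 0 := by
    simpa using ((hasDerivAt_id (0:ℝ)).mul_const c).const_sub 1
  have hval : (1:ℝ) - 0*c ≠ 0 := by norm_num
  have hsqrt : HasDerivAt (fun x : ℝ => Real.sqrt (1 - x*c)) ((-c) / (2 * Real.sqrt (1 - 0*c))) 0 :=
    hinner.sqrt hval
  have hne : Real.sqrt (1 - 0*c) ≠ 0 := by norm_num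
  have hinv : HasDerivAt (fun x : ℝ => (Real.sqrt (1 - x*c))⁻¹)
      (-((-c) / (2 * Real.sqrt (1 - 0*c))) / (Real.sqrt (1 - 0*c))^2) 0 := hsqrt.inv hne
  have hd : (-((-c) / (2 * Real.sqrt (1 - 0*c))) / (Real.sqrt (1 - 0*c))^2) = c/2 := by
    norm_num; ring
  rw [hd] at hinv
  have := hasDerivAt_iff_tendsto_slope.1 hinv
  apply this.congr
  intro x
  rw [slope_def_field]
  norm_num

-- sqrt inequality: for 0 ≤ x ≤ 1/2, 1 ≤ 1/√(1-x) ≤ 1+x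
lemma sqrt_ineq {x : ℝ} (h0 : 0 ≤ x) (h2 : x ≤ 1/2) :
    1 ≤ 1/Real.sqrt (1-x) ∧ 1/Real.sqrt (1-x) ≤ 1 + x := by
  have h1x : (0:ℝ) < 1 - x := by linarith
  have hsp : 0 < Real.sqrt (1-x) := Real.sqrt_pos.2 h1x
  have hs1 : Real.sqrt (1-x) ≤ 1 := by
    calc Real.sqrt (1-x) ≤ Real.sqrt 1 := Real.sqrt_le_sqrt (by linarith)
      _ = 1 := Real.sqrt_one
  constructor
  · rw [le_div_iff₀ hsp]; simpa using hs1
  · rw [div_le_iff₀ hsp]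
    have ht2 := Real.sq_sqrt h1x.le
    set t := Real.sqrt (1-x)
    nlinarith [sq_nonneg ((1+x)*t - 1), sq_nonneg (t - 1), hsp.le]
end SchwarzschildAux

set_option maxHeartbeats 2000000 in
/-- Weak-deflection limit: with `Δφ(b) = 2∫_{r_p(b)}^{∞} dr/(r²√(1/b² - f(r)))`
the total azimuthal angle of a scattering null geodesic, one has
`b·(Δφ(b) - π) → 4m` as `b → ∞`: for `b ≫ 3√3·m` the orbit is an almost
straight line with deflection angle asymptotic to `4m/b`. -/
theorem schwarzschild_weak_deflection_angle
    (m : ℝ) (hm : 0 < m) (f : ℝ → ℝ)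
    (hf : ∀ r : ℝ, f r = (1 - 2 * m / r) / r ^ 2)
    (rp : ℝ → ℝ)
    (hrp : ∀ b : ℝ, 3 * Real.sqrt 3 * m < b →
      rp b ∈ Set.Ioi (3 * m) ∧ f (rp b) = 1 / b ^ 2)
    (Δφ : ℝ → ℝ)
    (hΔφ : ∀ b : ℝ, 3 * Real.sqrt 3 * m < b →
      Δφ b = 2 * ∫ r in Set.Ioi (rp b), 1 / (r ^ 2 * Real.sqrt (1 / b ^ 2 - f r))) :
    Tendsto (fun b : ℝ => b * (Δφ b - Real.pi)) atTop (nhds (4 * m)) := by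
  have hπ := Real.pi_pos
  have hs3 : (0:ℝ) < Real.sqrt 3 := Real.sqrt_pos.2 (by norm_num)
  have h33 : (0:ℝ) < 3 * Real.sqrt 3 * m := by positivity
  set S : Set ℝ := Set.Ioo 0 (Real.pi/2) with hS
  set ε : ℝ → ℝ := fun b => 2*m / rp b with hεdef
  -- basic facts for each admissible b
  have hbase : ∀ b : ℝ, 3 * Real.sqrt 3 * m < b →
      0 < b ∧ 3*m < rp b ∧ (1 - 2*m/(rp b))/(rp b)^2 = 1/b^2 ∧
      0 < ε b ∧ ε b < 2/3 ∧ b * ε b = 2*m / Real.sqrt (1 - ε b) := by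
    intro b hb
    have hb0 : 0 < b := lt_trans h33 hb
    obtain ⟨hρm, hfρ⟩ := hrp b hb
    have hρm' : 3*m < rp b := hρm
    have hρ0 : 0 < rp b := by linarith
    have hfρ' : (1 - 2*m/(rp b))/(rp b)^2 = 1/b^2 := by rw [← hf (rp b)]; exact hfρ
    have hεpos : 0 < ε b := by simp only [hεdef]; positivity
    have hεlt : ε b < 2/3 := by
      simp only [hεdef]
      rw [div_lt_iff₀ hρ0]; linarith
    have h1 : 1 - ε b = (rp b / b)^2 := by
      have h2 : (1 - 2*m/(rp b)) = (rp b)^2/b^2 := by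
        field_simp at hfρ' ⊢
        nlinarith [hfρ']
      simp only [hεdef]
      rw [h2, div_pow]
    have hsq : Real.sqrt (1 - ε b) = rp b / b := by
      rw [h1, Real.sqrt_sq (by positivity)]
    have hbε : b * ε b = 2*m / Real.sqrt (1 - ε b) := by
      rw [hsq]
      simp only [hεdef]
      field_simp
    exact ⟨hb0, hρm', hfρ', hεpos, hεlt, hbε⟩
  -- bound on b * ε b and ε b
  have hbεle : ∀ b : ℝ, 3 * Real.sqrt 3 * m < b → b * ε b ≤ 2 * Real.sqrt 3 * m := by
    intro b hb
    obtain ⟨hb0, hρm, hfρ', hεpos, hεlt, hbε⟩ := hbase b hb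
    have h13 : Real.sqrt (1/3) ≤ Real.sqrt (1 - ε b) := Real.sqrt_le_sqrt (by linarith)
    have h13' : Real.sqrt (1/3) = 1 / Real.sqrt 3 := by
      rw [one_div, one_div, Real.sqrt_inv]
    have hpos : (0:ℝ) < Real.sqrt (1/3) := by rw [h13']; positivity
    rw [hbε]
    calc 2*m / Real.sqrt (1 - ε b) ≤ 2*m / Real.sqrt (1/3) := by
          apply div_le_div_of_nonneg_left (by linarith) hpos h13
      _ = 2 * Real.sqrt 3 * m := by rw [h13']; field_simp
  have hεle : ∀ b : ℝ, 3 * Real.sqrt 3 * m < b → ε b ≤ 2 * Real.sqrt 3 * m / b := by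
    intro b hb
    obtain ⟨hb0, _, _, _, _, _⟩ := hbase b hb
    rw [le_div_iff₀ hb0]
    calc ε b * b = b * ε b := by ring
      _ ≤ 2 * Real.sqrt 3 * m := hbεle b hb
  -- ε → 0
  have hεlim : Tendsto ε atTop (nhds 0) := by
    apply tendsto_of_tendsto_of_tendsto_of_le_of_le'
      (tendsto_const_nhds (x := (0:ℝ))) (tendsto_const_nhds.div_atTop tendsto_id :
        Tendsto (fun b : ℝ => 2 * Real.sqrt 3 * m / b) atTop (nhds 0))
    · filter_upwards [eventually_gt_atTop (3 * Real.sqrt 3 * m)] with b hb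
      exact (hbase b hb).2.2.2.1.le
    · filter_upwards [eventually_gt_atTop (3 * Real.sqrt 3 * m)] with b hb
      exact hεle b hb
  -- b * ε b → 2m
  have hbεlim : Tendsto (fun b => b * ε b) atTop (nhds (2*m)) := by
    have hcont : ContinuousAt (fun x : ℝ => 2*m / Real.sqrt (1 - x)) 0 := by
      apply ContinuousAt.div continuousAt_const
      · exact Real.continuous_sqrt.continuousAt.comp (by fun_prop)
      · simp [Real.sqrt_one]
    have := (hcont.tendsto.comp hεlim)
    simp only [Function.comp_def] at this
    rw [show (2:ℝ)*m / Real.sqrt (1 - 0) = 2*m by simp [Real.sqrt_one]] at this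
    apply this.congr'
    filter_upwards [eventually_gt_atTop (3 * Real.sqrt 3 * m)] with b hb
    exact ((hbase b hb).2.2.2.2.2).symm
  -- pointwise limit
  have hptlim : ∀ θ : ℝ, Tendsto (fun b => 2*b*(1/Real.sqrt (1 - ε b * hAux θ) - 1))
      atTop (nhds (2*m*hAux θ)) := by
    intro θ
    have hcomp : Tendsto (fun b => (1/Real.sqrt (1 - ε b * hAux θ) - 1)/(ε b)) atTop
        (nhds (hAux θ / 2)) := by
      apply (slope_lim (hAux θ)).comp
      apply tendsto_nhdsWithin_of_tendsto_nhds_of_eventually_within _ hεlim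
      filter_upwards [eventually_gt_atTop (3 * Real.sqrt 3 * m)] with b hb
      exact Set.mem_compl_singleton_iff.2 (ne_of_gt (hbase b hb).2.2.2.1)
    have hprod := (hbεlim.const_mul 2).mul hcomp
    have hval : (2*(2*m))*(hAux θ/2) = 2*m*hAux θ := by ring
    rw [hval] at hprod
    apply hprod.congr'
    filter_upwards [eventually_gt_atTop (3 * Real.sqrt 3 * m)] with b hb
    have hεne : ε b ≠ 0 := ne_of_gt (hbase b hb).2.2.2.1
    field_simp
  -- eventual identity  b(Δφ b - π) = ∫ over S
  have hident : ∀ᶠ b in atTop, b * (Δφ b - Real.pi)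
      = ∫ θ in S, 2*b*(1/Real.sqrt (1 - ε b * hAux θ) - 1) := by
    filter_upwards [eventually_gt_atTop (3 * Real.sqrt 3 * m)] with b hb
    obtain ⟨hb0, hρm, hfρ', hεpos, hεlt, _⟩ := hbase b hb
    have hstep0 : (∫ (r:ℝ) in Set.Ioi (rp b), 1 / (r ^ 2 * Real.sqrt (1 / b ^ 2 - f r)))
        = ∫ θ in S, 1/Real.sqrt (1 - ε b * hAux θ) := by
      have hfr : ∀ r : ℝ, 1 / (r ^ 2 * Real.sqrt (1 / b ^ 2 - f r))
          = 1 / (r ^ 2 * Real.sqrt (1 / b ^ 2 - (1 - 2*m/r)/r^2)) := by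
        intro r; rw [hf r]
      simp only [hfr]
      rw [subst_integral m b (rp b) hm hρm hfρ']
    have hsub : Δφ b = 2 * ∫ θ in S, 1/Real.sqrt (1 - ε b * hAux θ) := by
      rw [hΔφ b hb, hstep0]
    -- integrability of the integrand on S
    have hgcont : ContinuousOn (fun θ => 1/Real.sqrt (1 - ε b * hAux θ))
        (Set.Icc 0 (Real.pi/2)) := by
      apply ContinuousOn.div continuousOn_const
      · exact (Real.continuous_sqrt.comp_continuousOn
          (continuousOn_const.sub (continuousOn_const.mul hAux_contOn)))
      · intro θ hθ
        obtain ⟨hh1, hh2⟩ := hAux_bounds hθ.1 hθ.2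
        have : ε b * hAux θ < 1 := by nlinarith
        have : (0:ℝ) < 1 - ε b * hAux θ := by linarith
        exact ne_of_gt (Real.sqrt_pos.2 this)
    have hgint : IntegrableOn (fun θ => 1/Real.sqrt (1 - ε b * hAux θ)) S := by
      apply (hgcont.integrableOn_Icc).mono_set Set.Ioo_subset_Icc_self
    have hint1 : IntegrableOn (fun _ : ℝ => (1:ℝ)) S := by
      exact integrableOn_const (by rw [hS, Real.volume_Ioo]; exact ENNReal.ofReal_ne_top)
    have hvol : ∫ _ in S, (1:ℝ) = Real.pi/2 := by
      rw [MeasureTheory.setIntegral_const, smul_eq_mul, mul_one, hS, Real.volume_real_Ioo_of_le (by linarith)]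
      ring
    have hsplit : ∫ θ in S, 2*b*(1/Real.sqrt (1 - ε b * hAux θ) - 1)
        = 2*b*((∫ θ in S, 1/Real.sqrt (1 - ε b * hAux θ)) - Real.pi/2) := by
      rw [MeasureTheory.integral_const_mul]
      rw [MeasureTheory.integral_sub hgint hint1]
      rw [hvol]
    rw [hsplit, hsub]
    ring
  -- domination
  have hdom : ∀ᶠ b in atTop, ∀ᵐ θ ∂(MeasureTheory.volume.restrict S),
      ‖2*b*(1/Real.sqrt (1 - ε b * hAux θ) - 1)‖ ≤ 12*m := by
    filter_upwards [eventually_gt_atTop (3 * Real.sqrt 3 * m),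
      eventually_ge_atTop (6 * Real.sqrt 3 * m)] with b hb hb6
    rw [MeasureTheory.ae_restrict_iff' measurableSet_Ioo]
    apply Filter.Eventually.of_forall
    intro θ hθ
    obtain ⟨hb0, hρm, hfρ', hεpos, hεlt, _⟩ := hbase b hb
    obtain ⟨hh1, hh2⟩ := hAux_bounds hθ.1.le hθ.2.le
    have hh0 : 0 ≤ hAux θ := by linarith
    set x := ε b * hAux θ with hx
    have hx0 : 0 ≤ x := by positivity
    have hbpos6 : (0:ℝ) < 6 * Real.sqrt 3 * m := by positivity
    have hx2 : x ≤ 1/2 := by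
      have h1 : x ≤ ε b * (3/2) := by nlinarith
      have h2 : ε b ≤ 2 * Real.sqrt 3 * m / b := hεle b hb
      have h3 : ε b * (3/2) ≤ (2 * Real.sqrt 3 * m / b) * (3/2) := by nlinarith
      have h4 : (2 * Real.sqrt 3 * m / b) * (3/2) = 3 * Real.sqrt 3 * m / b := by ring
      have h5 : 3 * Real.sqrt 3 * m / b ≤ 1/2 := by
        rw [div_le_iff₀ hb0]; linarith
      linarith
    obtain ⟨hlo, hhi⟩ := sqrt_ineq hx0 hx2
    have hF0 : 0 ≤ 2*b*(1/Real.sqrt (1 - x) - 1) := by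
      have : 0 ≤ 1/Real.sqrt (1-x) - 1 := by linarith
      positivity
    rw [Real.norm_eq_abs, abs_of_nonneg hF0]
    have hstep : 2*b*(1/Real.sqrt (1 - x) - 1) ≤ 2*b*x := by
      apply mul_le_mul_of_nonneg_left (by linarith) (by positivity)
    have hstep2 : 2*b*x ≤ 3*(b * ε b) := by
      have h9 : 0 ≤ (b * ε b) * (3/2 - hAux θ) :=
        mul_nonneg (mul_nonneg hb0.le hεpos.le) (by linarith)
      rw [hx]; nlinarith [h9]
    have hstep3 : 3*(b*ε b) ≤ 3*(2*Real.sqrt 3*m) := by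
      have := hbεle b hb; linarith
    have hs32 : Real.sqrt 3 ≤ 2 := by
      rw [show (2:ℝ) = Real.sqrt 4 by rw [show (4:ℝ) = 2^2 by norm_num, Real.sqrt_sq]; norm_num]
      exact Real.sqrt_le_sqrt (by norm_num)
    have hfin : 3*(2*Real.sqrt 3*m) ≤ 12*m := by nlinarith [mul_le_mul_of_nonneg_right hs32 hm.le]
    linarith
  -- measurability
  have hmeas : ∀ᶠ b in atTop, AEStronglyMeasurable
      (fun θ => 2*b*(1/Real.sqrt (1 - ε b * hAux θ) - 1))
      (MeasureTheory.volume.restrict S) := by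
    apply Filter.Eventually.of_forall
    intro b
    apply Measurable.aestronglyMeasurable
    apply Measurable.const_mul
    apply Measurable.sub _ measurable_const
    apply Measurable.div measurable_const
    apply Real.continuous_sqrt.measurable.comp
    apply Measurable.const_sub
    apply Measurable.const_mul
    unfold hAux
    apply Measurable.add measurable_const
    exact ((Real.continuous_sin.measurable).pow_const 2).div
      (measurable_const.add Real.continuous_sin.measurable)
  -- bound integrable
  have hbint : Integrable (fun _ : ℝ => 12*m) (MeasureTheory.volume.restrict S) := by
    apply MeasureTheory.integrable_const_iff.2
    right
    exact isFiniteMeasure_restrict.2 (by rw [hS, Real.volume_Ioo]; exact ENNReal.ofReal_ne_top)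
  -- dominated convergence
  have hDC := MeasureTheory.tendsto_integral_filter_of_dominated_convergence
    (μ := MeasureTheory.volume.restrict S) (F := fun b θ => 2*b*(1/Real.sqrt (1 - ε b * hAux θ) - 1))
    (f := fun θ => 2*m*hAux θ) (fun _ => 12*m) hmeas hdom hbint
    (Filter.Eventually.of_forall fun θ => hptlim θ)
  have hlimval : ∫ θ in S, 2*m*hAux θ = 4*m := by
    rw [MeasureTheory.integral_const_mul, hS, hAux_integral]
    ring
  rw [hlimval] at hDC
  exact hDC.congr' (by filter_upwards [hident] with b hb using hb.symm)
end

section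
/- Let m > 0 and f(r) = (1 - 2m/r)/r² for r > 2m, and for b > 3√3·m define Δφ(b) = 2∫_{r_p(b)}^{∞} dr/(r² √(1/b² - f(r))), where r_p(b) is the unique root of f(r) = 1/b² in (3m, ∞). Then Δφ(b) → ∞ as b → (3√3·m)⁺: for every M there is δ > 0 such that Δφ(b) > M whenever 3√3·m < b < 3√3·m + δ. That is, for 0 < b - 3√3·m ≪ m a massless particle circles the unstable circular orbit many times before flying back to infinity. -/
open Filter MeasureTheory

open Set

set_option maxHeartbeats 1000000


private lemma Fderiv (m : ℝ) {r : ℝ} (hr : 0 < r) :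
    HasDerivAt (fun s : ℝ => (1 - 2 * m / s) / s ^ 2) ((6 * m - 2 * r) / r ^ 4) r := by
  have h1 : HasDerivAt (fun s : ℝ => 1 - 2 * m / s) (2 * m / r ^ 2) r := by
    have h := (hasDerivAt_const r (1:ℝ)).sub ((hasDerivAt_inv hr.ne').const_mul (2*m))
    have he : (fun s : ℝ => 1 - 2 * m / s) = fun s : ℝ => 1 - 2 * m * s⁻¹ := by
      funext x; rw [div_eq_mul_inv]
    rw [he]
    refine h.congr_deriv ?_
    ring
  have h2 : HasDerivAt (fun s : ℝ => s ^ 2) (2 * r) r := by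
    simpa using hasDerivAt_pow 2 r
  have h := h1.div h2 (by positivity)
  refine h.congr_deriv ?_
  have hr' := hr.ne'
  field_simp
  ring

private lemma FstrictAnti (m : ℝ) (hm : 0 < m) :
    StrictAntiOn (fun s : ℝ => (1 - 2 * m / s) / s ^ 2) (Set.Ici (3*m)) := by
  apply strictAntiOn_of_deriv_neg (convex_Ici _)
  · intro x hx
    have hx0 : 0 < x := lt_of_lt_of_le (by linarith) hx
    exact (Fderiv m hx0).continuousAt.continuousWithinAt
  · intro x hx
    rw [interior_Ici] at hx
    have hx3 : 3 * m < x := hx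
    have hx0 : 0 < x := by linarith
    rw [(Fderiv m hx0).deriv]
    apply div_neg_of_neg_of_pos (by linarith) (by positivity)

private lemma Fdiff_upper (m : ℝ) (hm : 0 < m) {a r : ℝ} (ha : 3*m ≤ a) (har : a ≤ r) :
    (1 - 2*m/a)/a^2 - (1 - 2*m/r)/r^2 ≤ (r - 3*m)^2 / (81*m^4) := by
  set G := fun s : ℝ => (1 - 2*m/s)/s^2 + (s - 3*m)^2 / (81*m^4) with hG
  have hd : ∀ x : ℝ, 0 < x →
      HasDerivAt G ((6*m - 2*x)/x^4 + 2*(x - 3*m) / (81*m^4)) x := by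
    intro x hx
    have h2 : HasDerivAt (fun s : ℝ => (s - 3*m)^2 / (81*m^4)) (2*(x-3*m)/(81*m^4)) x := by
      have := (((hasDerivAt_id x).sub_const (3*m)).pow 2).div_const (81*m^4)
      refine this.congr_deriv ?_
      simp only [id]
      push_cast
      ring_nf
    exact (Fderiv m hx).add h2
  have hmono : MonotoneOn G (Set.Ici (3*m)) := by
    apply monotoneOn_of_deriv_nonneg (convex_Ici _)
    · intro x hx
      have hx0 : 0 < x := lt_of_lt_of_le (by linarith) hx
      exact (hd x hx0).continuousAt.continuousWithinAt
    · intro x hx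
      rw [interior_Ici] at hx
      have hx0 : 0 < x := by have : 3*m < x := hx; linarith
      exact (hd x hx0).differentiableAt.differentiableWithinAt
    · intro x hx
      rw [interior_Ici] at hx
      have hx3 : 3 * m < x := hx
      have hx0 : 0 < x := by linarith
      rw [(hd x hx0).deriv]
      have hx4 : (3*m)^4 ≤ x^4 := by
        apply pow_le_pow_left₀ (by positivity) (le_of_lt hx3)
      have h81 : (0:ℝ) < 81 * m^4 := by positivity
      have hle : 2*(x-3*m)/x^4 ≤ 2*(x-3*m)/(81*m^4) := by
        apply div_le_div_of_nonneg_left (by linarith) h81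
        calc (81:ℝ)*m^4 = (3*m)^4 := by ring
          _ ≤ x^4 := hx4
      have heq : (6*m - 2*x)/x^4 = -(2*(x-3*m)/x^4) := by
        rw [← neg_div]; ring_nf
      rw [heq]
      linarith
  have := hmono (Set.mem_Ici.mpr ha) (Set.mem_Ici.mpr (ha.trans har)) har
  simp only [hG] at this
  have h0 : (0:ℝ) ≤ (a - 3*m)^2 / (81*m^4) := by positivity
  linarith

private lemma Fdiff_lower (m : ℝ) (hm : 0 < m) {a r : ℝ} (ha : 3*m < a) (har : a ≤ r)
    (hr1 : r ≤ a + 1) :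
    2*(a - 3*m)/(a+1)^4 * (r - a) ≤ (1 - 2*m/a)/a^2 - (1 - 2*m/r)/r^2 := by
  set c := 2*(a - 3*m)/(a+1)^4 with hc
  set G := fun s : ℝ => -((1 - 2*m/s)/s^2) - c * s with hG
  have hd : ∀ x : ℝ, 0 < x → HasDerivAt G (-((6*m - 2*x)/x^4) - c) x := by
    intro x hx
    exact ((Fderiv m hx).neg).sub ((hasDerivAt_id x).const_mul c |>.congr_deriv (by ring))
  have hmono : MonotoneOn G (Set.Icc a (a+1)) := by
    apply monotoneOn_of_deriv_nonneg (convex_Icc _ _)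
    · intro x hx
      have hx0 : 0 < x := lt_of_lt_of_le (by linarith) hx.1
      exact (hd x hx0).continuousAt.continuousWithinAt
    · intro x hx
      rw [interior_Icc] at hx
      have hx0 : 0 < x := by have := hx.1; linarith
      exact (hd x hx0).differentiableAt.differentiableWithinAt
    · intro x hx
      rw [interior_Icc] at hx
      obtain ⟨hx1, hx2⟩ := hx
      have hx0 : 0 < x := by linarith
      rw [(hd x hx0).deriv]
      have key : c ≤ 2*(x - 3*m)/x^4 := by
        rw [hc]
        apply div_le_div₀ (by linarith) (by linarith) (by positivity)
        apply pow_le_pow_left₀ (by positivity) (by linarith)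
      have heq : -((6*m - 2*x)/x^4) = 2*(x-3*m)/x^4 := by
        rw [← neg_div]; ring_nf
      rw [heq]
      linarith
  have hmem1 : a ∈ Set.Icc a (a+1) := by constructor <;> linarith
  have hmem2 : r ∈ Set.Icc a (a+1) := by constructor <;> linarith
  have := hmono hmem1 hmem2 har
  simp only [hG] at this
  nlinarith [this]

/-- Strong-deflection divergence: the total azimuthal angle
`Δφ(b) = 2∫_{r_p(b)}^{∞} dr/(r²√(1/b² - f(r)))` diverges as the impact
parameter approaches the critical value `3√3·m` from above: for
`0 < b - 3√3·m ≪ m` the massless particle circles the unstable circular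
orbit many times before flying back to infinity. -/

theorem schwarzschild_strong_deflection_divergence
    (m : ℝ) (hm : 0 < m) (f : ℝ → ℝ)
    (hf : ∀ r : ℝ, f r = (1 - 2 * m / r) / r ^ 2)
    (rp : ℝ → ℝ)
    (hrp : ∀ b : ℝ, 3 * Real.sqrt 3 * m < b →
      rp b ∈ Set.Ioi (3 * m) ∧ f (rp b) = 1 / b ^ 2)
    (Δφ : ℝ → ℝ)
    (hΔφ : ∀ b : ℝ, 3 * Real.sqrt 3 * m < b →
      Δφ b = 2 * ∫ r in Set.Ioi (rp b), 1 / (r ^ 2 * Real.sqrt (1 / b ^ 2 - f r))) :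
    ∀ M : ℝ, ∃ δ > 0, ∀ b : ℝ,
      3 * Real.sqrt 3 * m < b → b < 3 * Real.sqrt 3 * m + δ → M < Δφ b := by
  intro M
  set F : ℝ → ℝ := fun s => (1 - 2 * m / s) / s ^ 2 with hFdef
  have hanti : StrictAntiOn F (Set.Ici (3*m)) := FstrictAnti m hm
  set M' := max M 1 with hM'def
  have hM'pos : (0:ℝ) < M' := lt_of_lt_of_le one_pos (le_max_right _ _)
  set η := (m/4) * Real.exp (-(8/9)*M') with hηdef
  have hηpos : 0 < η := by positivity
  have hηm : η < m/4 := by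
    have h1 : Real.exp (-(8/9)*M') < 1 := by
      rw [Real.exp_lt_one_iff]
      nlinarith
    nlinarith
  set bc := 3 * Real.sqrt 3 * m with hbcdef
  have hs3 : Real.sqrt 3 ^ 2 = 3 := Real.sq_sqrt (by norm_num)
  have hs3pos : 0 < Real.sqrt 3 := Real.sqrt_pos.mpr (by norm_num)
  have hbcpos : 0 < bc := by positivity
  have hbcsq : bc ^ 2 = 27 * m ^ 2 := by
    rw [hbcdef, mul_pow, mul_pow, hs3]; ring
  have hF3m : F (3*m) = 1 / bc ^ 2 := by
    rw [hbcsq, hFdef]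
    field_simp
    ring
  set K := F (3*m + η) with hKdef
  have hKpos : 0 < K := by
    rw [hKdef, hFdef]
    have h1 : 0 < 3*m + η := by linarith
    have h2 : 2*m / (3*m+η) < 1 := by
      rw [div_lt_one h1]; linarith
    have : 0 < 1 - 2*m/(3*m+η) := by linarith
    positivity
  have hKlt : K < 1 / bc ^ 2 := by
    rw [← hF3m, hKdef]
    exact hanti (Set.mem_Ici.mpr le_rfl) (Set.mem_Ici.mpr (by linarith)) (by linarith)
  set δ := 1 / Real.sqrt K - bc with hδdef
  have hsKpos : 0 < Real.sqrt K := Real.sqrt_pos.mpr hKpos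
  have hbclt : bc < 1 / Real.sqrt K := by
    have h1 : Real.sqrt K < Real.sqrt (1 / bc^2) := Real.sqrt_lt_sqrt hKpos.le hKlt
    have h2 : Real.sqrt (1 / bc^2) = 1 / bc := by
      rw [one_div, Real.sqrt_inv, Real.sqrt_sq hbcpos.le, one_div]
    rw [h2] at h1
    rw [lt_div_iff₀ hsKpos]
    have h3 : Real.sqrt K * bc < 1 := (lt_div_iff₀ hbcpos).mp h1
    nlinarith
  refine ⟨δ, by rw [hδdef]; linarith, ?_⟩
  intro b hb1 hb2
  have hbpos : 0 < b := lt_trans hbcpos hb1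
  have hb2' : b < 1 / Real.sqrt K := by rw [hδdef] at hb2; linarith
  have hKb : K < 1 / b ^ 2 := by
    have h1 : b * Real.sqrt K < 1 := by
      rw [lt_div_iff₀ hsKpos] at hb2'; exact hb2'
    have h2 : b^2 * K < 1 := by
      have hK' : Real.sqrt K * Real.sqrt K = K := Real.mul_self_sqrt hKpos.le
      nlinarith [mul_pos hbpos hsKpos]
    rw [lt_div_iff₀ (by positivity : (0:ℝ) < b^2)]
    linarith
  obtain ⟨haI, hfa⟩ := hrp b hb1
  set a := rp b with hadef
  have ha3 : 3*m < a := haI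
  have ha0 : 0 < a := by linarith
  have hFa : F a = 1 / b ^ 2 := by
    show (1 - 2 * m / a) / a ^ 2 = 1 / b ^ 2
    rw [← hf a]; exact hfa
  set ε := a - 3*m with hεdef
  have hεpos : 0 < ε := by rw [hεdef]; linarith
  -- a < 3m + η
  have haη : a < 3*m + η := by
    by_contra hcon
    push_neg at hcon
    have : F a ≤ K := by
      rcases eq_or_lt_of_le hcon with h | h
      · rw [hKdef, ← h]
      · exact le_of_lt (hanti (Set.mem_Ici.mpr (by linarith)) (Set.mem_Ici.mpr ha3.le) h)
    rw [hFa] at this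
    linarith
  have hεη : ε < η := by rw [hεdef]; linarith
  have hεm : ε < m/4 := lt_trans hεη hηm
  -- the integrand
  set h : ℝ → ℝ := fun r => 1 / (r ^ 2 * Real.sqrt (1 / b ^ 2 - F r)) with hhdef
  have hΔφb : Δφ b = 2 * ∫ r in Set.Ioi a, h r := by
    rw [hΔφ b hb1]
    have heq : (∫ r in Set.Ioi a, 1 / (r ^ 2 * Real.sqrt (1 / b ^ 2 - f r)))
        = ∫ r in Set.Ioi a, h r := by
      apply setIntegral_congr_fun measurableSet_Ioi
      intro r _
      simp only [hhdef, hf r, hFdef]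
    rw [heq]
  have hnonneg : ∀ r, 0 ≤ h r := by
    intro r
    rw [hhdef]
    positivity
  -- strict decrease consequences
  have hFlt : ∀ r, a < r → F r < F a := by
    intro r hr
    exact hanti (Set.mem_Ici.mpr ha3.le) (Set.mem_Ici.mpr (by linarith)) hr
  have hpos : ∀ r, a < r → 0 < 1 / b ^ 2 - F r := by
    intro r hr
    have := hFlt r hr
    rw [← hFa]
    linarith
  -- continuity of h on Ioi a
  have hcont : ContinuousOn h (Set.Ioi a) := by
    intro r hr
    have hr' : a < r := hr
    have hr0 : 0 < r := by linarith
    have hd : 0 < 1 / b ^ 2 - F r := hpos r hr'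
    apply ContinuousAt.continuousWithinAt
    have hFc : ContinuousAt F r := (Fderiv m hr0).continuousAt
    have hsq : ContinuousAt (fun s => Real.sqrt (1 / b ^ 2 - F s)) r :=
      Real.continuous_sqrt.continuousAt.comp (continuousAt_const.sub hFc)
    have hden : ContinuousAt (fun s => s ^ 2 * Real.sqrt (1 / b ^ 2 - F s)) r :=
      ((continuous_pow 2).continuousAt).mul hsq
    apply ContinuousAt.div continuousAt_const hden
    have : 0 < r ^ 2 * Real.sqrt (1 / b ^ 2 - F r) := by positivity
    exact ne_of_gt this
  -- integrability
  set c1 := 2*(a - 3*m)/(a+1)^4 with hc1def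
  have hc1pos : 0 < c1 := by
    rw [hc1def]
    apply div_pos (by linarith) (by positivity)
  set c2 := F a - F (a+1) with hc2def
  have hc2pos : 0 < c2 := by
    rw [hc2def]
    have := hFlt (a+1) (lt_add_one a)
    linarith
  have hint1 : IntegrableOn h (Set.Ioc a (a+1)) := by
    set C := 1/(a^2 * Real.sqrt c1) with hCdef
    have hg1 : IntegrableOn (fun r : ℝ => C * (r - a) ^ (-(1/2) : ℝ)) (Set.Ioc a (a+1)) := by
      have h0 : IntervalIntegrable (fun x : ℝ => x ^ (-(1/2):ℝ)) volume 0 1 :=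
        intervalIntegral.intervalIntegrable_rpow' (by norm_num)
      have h1 := h0.comp_sub_right a
      rw [zero_add] at h1
      have h2 : IntervalIntegrable (fun x : ℝ => (x - a) ^ (-(1/2):ℝ)) volume a (a+1) := by
        rw [show a + 1 = 1 + a by ring]
        exact h1
      have h3 : IntegrableOn (fun x : ℝ => (x - a) ^ (-(1/2):ℝ)) (Set.Ioc a (a+1)) :=
        (intervalIntegrable_iff_integrableOn_Ioc_of_le (by linarith)).mp h2
      exact h3.const_mul C
    apply Integrable.mono' hg1
      ((hcont.mono Set.Ioc_subset_Ioi_self).aestronglyMeasurable measurableSet_Ioc)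
    rw [ae_restrict_iff' measurableSet_Ioc]
    apply ae_of_all
    intro r hr
    obtain ⟨hr1, hr2⟩ := hr
    have hr0 : 0 < r := by linarith
    have hra : 0 < r - a := by linarith
    have hlow : c1 * (r - a) ≤ F a - F r := Fdiff_lower m hm ha3 hr1.le hr2
    have hΔpos : 0 < 1/b^2 - F r := hpos r hr1
    have heqΔ : 1/b^2 - F r = F a - F r := by rw [hFa]
    rw [Real.norm_of_nonneg (hnonneg r)]
    have hsq1 : Real.sqrt (c1 * (r-a)) ≤ Real.sqrt (1/b^2 - F r) := by
      rw [heqΔ]; exact Real.sqrt_le_sqrt hlow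
    have hsq2 : 0 < Real.sqrt (c1 * (r-a)) := Real.sqrt_pos.mpr (by positivity)
    have hmul : a^2 * Real.sqrt (c1*(r-a)) ≤ r^2 * Real.sqrt (1/b^2 - F r) := by
      apply mul_le_mul (pow_le_pow_left₀ ha0.le hr1.le 2) hsq1 hsq2.le (by positivity)
    have hrec : 1 / (r^2 * Real.sqrt (1/b^2 - F r)) ≤ 1/(a^2 * Real.sqrt (c1*(r-a))) :=
      one_div_le_one_div_of_le (by positivity) hmul
    have hend : 1/(a^2 * Real.sqrt (c1*(r-a))) = C * (r-a)^(-(1/2):ℝ) := by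
      have hsr : Real.sqrt (r-a) = (r-a)^((1:ℝ)/2) := Real.sqrt_eq_rpow (r-a)
      have hne1 : a ≠ 0 := ha0.ne'
      have hne2 : Real.sqrt c1 ≠ 0 := (Real.sqrt_pos.mpr hc1pos).ne'
      have hne3 : Real.sqrt (r-a) ≠ 0 := (Real.sqrt_pos.mpr hra).ne'
      rw [Real.sqrt_mul hc1pos.le, hCdef, Real.rpow_neg hra.le, ← hsr]
      field_simp
    calc h r ≤ 1/(a^2 * Real.sqrt (c1*(r-a))) := hrec
      _ = C * (r-a)^(-(1/2):ℝ) := hend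
  have hint2 : IntegrableOn h (Set.Ioi (a+1)) := by
    have hg2 : IntegrableOn (fun r : ℝ => (1/Real.sqrt c2) * r ^ (-2:ℝ)) (Set.Ioi (a+1)) :=
      (integrableOn_Ioi_rpow_of_lt (by norm_num) (by linarith)).const_mul _
    apply Integrable.mono' hg2
      ((hcont.mono (Set.Ioi_subset_Ioi (by linarith))).aestronglyMeasurable measurableSet_Ioi)
    rw [ae_restrict_iff' measurableSet_Ioi]
    apply ae_of_all
    intro r hr
    have hr1 : a + 1 < r := hr
    have hr0 : 0 < r := by linarith
    have hc2le : c2 ≤ 1/b^2 - F r := by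
      have hFr : F r ≤ F (a+1) := le_of_lt
        (hanti (Set.mem_Ici.mpr (by linarith)) (Set.mem_Ici.mpr (by linarith)) hr1)
      rw [← hFa]
      rw [hc2def]
      linarith
    rw [Real.norm_of_nonneg (hnonneg r)]
    have hsc2 : 0 < Real.sqrt c2 := Real.sqrt_pos.mpr hc2pos
    have hsq : Real.sqrt c2 ≤ Real.sqrt (1/b^2 - F r) := Real.sqrt_le_sqrt hc2le
    have hmul : r^2 * Real.sqrt c2 ≤ r^2 * Real.sqrt (1/b^2-F r) := mul_le_mul_of_nonneg_left hsq (sq_nonneg r)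
    have hrec : 1 / (r^2 * Real.sqrt (1/b^2 - F r)) ≤ 1/(r^2 * Real.sqrt c2) :=
      one_div_le_one_div_of_le (mul_pos (pow_pos hr0 2) hsc2) hmul
    have hpow : r ^ (-2:ℝ) = (r^2)⁻¹ := by
      rw [show (-2:ℝ) = ((-2:ℤ):ℝ) by norm_num, Real.rpow_intCast, zpow_neg]
      norm_cast
    have hend : 1/(r^2 * Real.sqrt c2) = (1/Real.sqrt c2) * r^(-2:ℝ) := by
      rw [hpow]; ring
    calc h r ≤ 1/(r^2 * Real.sqrt c2) := hrec
      _ = (1/Real.sqrt c2) * r^(-2:ℝ) := hend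
  have hintIoi : IntegrableOn h (Set.Ioi a) := by
    rw [← Set.Ioc_union_Ioi_eq_Ioi (le_of_lt (lt_add_one a))]
    exact hint1.union hint2
  -- main lower bound region
  set A := 3*m + 2*ε with hAdef
  set B := 4*m with hBdef
  have hAa : a < A := by rw [hAdef, hεdef]; linarith
  have hA3 : 3*m < A := by rw [hAdef]; linarith
  have hAB : A ≤ B := by rw [hAdef, hBdef]; linarith
  have hsub : (∫ r in Set.Ioc A B, h r) ≤ ∫ r in Set.Ioi a, h r := by
    apply setIntegral_mono_set hintIoi (ae_of_all _ hnonneg)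
    apply HasSubset.Subset.eventuallyLE
    intro x hx
    exact lt_trans hAa hx.1
  set g : ℝ → ℝ := fun r => (9/16) * (r - 3*m)⁻¹ with hgdef
  have hgint : IntegrableOn g (Set.Ioc A B) := by
    have hco : ContinuousOn g (Set.Icc A B) := by
      apply ContinuousOn.mul continuousOn_const
      apply ContinuousOn.inv₀ (by fun_prop)
      intro x hx
      have hx1 : A ≤ x := hx.1
      have : 0 < x - 3*m := by linarith
      exact ne_of_gt this
    exact (hco.integrableOn_Icc).mono_set Set.Ioc_subset_Icc_self
  have hbound : ∀ r ∈ Set.Ioc A B, g r ≤ h r := by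
    intro r hr
    obtain ⟨hr1, hr2⟩ := hr
    have hr3 : 3*m < r := lt_trans hA3 hr1
    have hr0 : 0 < r := by linarith
    have hra : a < r := lt_trans hAa hr1
    have hrB : r ≤ 4*m := by rw [hBdef] at hr2; exact hr2
    have hup : F a - F r ≤ (r - 3*m)^2/(81*m^4) := Fdiff_upper m hm ha3.le hra.le
    have hΔpos : 0 < 1/b^2 - F r := hpos r hra
    have heqΔ : 1/b^2 - F r = F a - F r := by rw [hFa]
    have hsq : Real.sqrt (1/b^2 - F r) ≤ (r - 3*m)/(9*m^2) := by
      rw [heqΔ]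
      have h1 := Real.sqrt_le_sqrt hup
      have h2 : (r-3*m)^2/(81*m^4) = ((r-3*m)/(9*m^2))^2 := by ring
      rw [h2, Real.sqrt_sq (div_nonneg (by linarith) (by positivity))] at h1
      exact h1
    have hr16 : r^2 ≤ 16*m^2 := by
      have := pow_le_pow_left₀ hr0.le hrB 2
      calc r^2 ≤ (4*m)^2 := this
        _ = 16*m^2 := by ring
    have hden : r^2 * Real.sqrt (1/b^2 - F r) ≤ (16/9)*(r - 3*m) := by
      calc r^2 * Real.sqrt (1/b^2 - F r) ≤ (16*m^2) * ((r-3*m)/(9*m^2)) := by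
            apply mul_le_mul hr16 hsq (Real.sqrt_nonneg _) (by positivity)
        _ = (16/9)*(r-3*m) := by field_simp
      -- done
    have hdenpos : 0 < r^2 * Real.sqrt (1/b^2 - F r) := by positivity
    have hgoal : (9/16) * (r - 3*m)⁻¹ ≤ 1 / (r^2 * Real.sqrt (1/b^2 - F r)) := by
      rw [← div_eq_mul_inv, div_le_div_iff₀ (by linarith : (0:ℝ) < r - 3*m) hdenpos]
      linarith [hden]
    exact hgoal
  have hmono : (∫ r in Set.Ioc A B, g r) ≤ ∫ r in Set.Ioc A B, h r :=
    setIntegral_mono_on hgint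
      (hintIoi.mono_set (fun x hx => lt_trans hAa hx.1)) measurableSet_Ioc hbound
  have hval : (∫ r in Set.Ioc A B, g r) = (9/16) * Real.log (m/(2*ε)) := by
    rw [← intervalIntegral.integral_of_le hAB]
    have hgfun : (∫ r in A..B, g r) = ∫ r in A..B, (9/16) * (r - 3*m)⁻¹ := rfl
    rw [hgfun, intervalIntegral.integral_const_mul]
    have hshift : (∫ r in A..B, (r - 3*m)⁻¹)
        = ∫ x in (A - 3*m)..(B - 3*m), x⁻¹ :=
      intervalIntegral.integral_comp_sub_right (fun x => x⁻¹) (3*m)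
    rw [hshift, show A - 3*m = 2*ε by rw [hAdef]; ring,
      show B - 3*m = m by rw [hBdef]; ring]
    rw [integral_inv (Set.notMem_uIcc_of_lt (by linarith) hm)]
  have hεη2 : m/(2*η) < m/(2*ε) := by
    apply div_lt_div_of_pos_left hm (by linarith) (by linarith)
  have hlogmono : Real.log (m/(2*η)) < Real.log (m/(2*ε)) :=
    Real.log_lt_log (by positivity) hεη2
  have h3 : m/(2*η) = 2 * Real.exp ((8/9)*M') := by
    rw [hηdef, show (-(8/9)*M') = -((8/9)*M') by ring, Real.exp_neg]
    have he : Real.exp ((8/9)*M') ≠ 0 := Real.exp_ne_zero _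
    field_simp
    ring
  have h4 : Real.log (2 * Real.exp ((8/9)*M')) = Real.log 2 + (8/9)*M' := by
    rw [Real.log_mul two_ne_zero (Real.exp_ne_zero _), Real.log_exp]
  have hlog2 : 0 < Real.log 2 := Real.log_pos (by norm_num)
  have hlog : (8/9) * M' < Real.log (m/(2*ε)) := by
    rw [h3, h4] at hlogmono
    linarith
  rw [hΔφb]
  have hge : (9/16) * Real.log (m/(2*ε)) ≤ ∫ r in Set.Ioi a, h r := by
    rw [← hval]
    exact le_trans hmono hsub
  have hMM' : M ≤ M' := le_max_left _ _
  linarith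
end

section
/- Let m > 0, f(r) = (1 - 2m/r)/r² for r > 2m, and consider a null geodesic with the critical impact parameter b = 3√3·m. Let r : [0, ∞) → ℝ be a differentiable function with r(λ) > 2m for all λ, satisfying the ingoing radial equation r'(λ) = -√(1/(27m²) - f(r(λ))) and r(0) = r₀ for some r₀ > 3m. Then r(λ) > 3m for all λ ≥ 0, r is strictly decreasing, r(λ) → 3m as λ → ∞, and the total azimuthal angle diverges: ∫_{0}^{∞} r(λ)^{-2} dλ = ∞. That is, a null geodesic with critical impact parameter spirals inward, winding infinitely many times while asymptotically approaching the photon sphere r = 3m without ever reaching it. -/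
open Filter MeasureTheory

/-- A null geodesic with the critical impact parameter `b = 3√3·m`, starting
at `r₀ > 3m` and obeying the ingoing radial equation
`r'(λ) = -√(1/(27m²) - f(r(λ)))`, stays above the photon sphere, is strictly
decreasing, asymptotically approaches `r = 3m` as `λ → ∞`, and its total
azimuthal angle `∫₀^∞ r(λ)⁻² dλ` diverges: it spirals inward, winding
infinitely many times while never reaching the photon sphere. -/
theorem schwarzschild_critical_spiral
    (m : ℝ) (hm : 0 < m) (f : ℝ → ℝ)
    (hf : ∀ s : ℝ, f s = (1 - 2 * m / s) / s ^ 2)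
    (r : ℝ → ℝ) (r₀ : ℝ) (hr₀ : 3 * m < r₀) (h0 : r 0 = r₀)
    (hpos : ∀ l : ℝ, 0 ≤ l → 2 * m < r l)
    (hode : ∀ l : ℝ, 0 ≤ l →
      HasDerivAt r (-Real.sqrt (1 / (27 * m ^ 2) - f (r l))) l) :
    (∀ l : ℝ, 0 ≤ l → 3 * m < r l) ∧
    StrictAntiOn r (Set.Ici 0) ∧
    Tendsto r atTop (nhds (3 * m)) ∧
    ∫⁻ l in Set.Ioi (0 : ℝ), ENNReal.ofReal (1 / (r l) ^ 2) = ⊤ := by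
  have hR0 : 0 < r₀ := by linarith
  -- key algebraic identity
  have key : ∀ s : ℝ, s ≠ 0 →
      1 / (27 * m ^ 2) - f s = (s - 3 * m) ^ 2 * ((s + 6 * m) / (27 * m ^ 2 * s ^ 3)) := by
    intro s hs
    rw [hf]
    field_simp
    ring
  -- continuity of r on [0,∞)
  have hrc : ContinuousOn r (Set.Ici 0) :=
    fun l hl => ((hode l hl).continuousAt).continuousWithinAt
  -- r is antitone on [0,∞)
  have hanti : AntitoneOn r (Set.Ici 0) := by
    apply antitoneOn_of_deriv_nonpos (convex_Ici 0) hrc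
    · intro x hx
      rw [interior_Ici] at hx
      exact ((hode x hx.le).differentiableAt).differentiableWithinAt
    · intro x hx
      rw [interior_Ici] at hx
      rw [(hode x hx.le).deriv]
      exact neg_nonpos.mpr (Real.sqrt_nonneg _)
  have hle : ∀ l : ℝ, 0 ≤ l → r l ≤ r₀ := by
    intro l hl
    have := hanti Set.self_mem_Ici (Set.mem_Ici.mpr hl) hl
    rwa [h0] at this
  -- the barrier constants
  set Csq : ℝ := (r₀ + 6 * m) / (27 * m ^ 2 * (27 * m ^ 3)) with hCsq_def
  have hCsqpos : 0 < Csq := by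
    apply div_pos (by linarith)
    positivity
  set C : ℝ := Real.sqrt Csq with hC_def
  have hCpos : 0 < C := Real.sqrt_pos.mpr hCsqpos
  -- upper bound on sqrt term for s ∈ [3m, r₀]
  have hsqle : ∀ s : ℝ, 3 * m ≤ s → s ≤ r₀ →
      Real.sqrt (1 / (27 * m ^ 2) - f s) ≤ C * (s - 3 * m) := by
    intro s h1 h2
    have hs0 : 0 < s := by linarith
    have hQle : (s + 6 * m) / (27 * m ^ 2 * s ^ 3) ≤ Csq := by
      apply div_le_div₀ (by linarith) (by linarith) (by positivity)
      have h3 : (3 * m) ^ 3 ≤ s ^ 3 := pow_le_pow_left₀ (by linarith) h1 3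
      nlinarith [sq_nonneg m, hm.le]
    rw [key s hs0.ne']
    have hC2 : C ^ 2 = Csq := Real.sq_sqrt hCsqpos.le
    have hb : (s - 3 * m) ^ 2 * ((s + 6 * m) / (27 * m ^ 2 * s ^ 3)) ≤ (C * (s - 3 * m)) ^ 2 := by
      calc (s - 3 * m) ^ 2 * ((s + 6 * m) / (27 * m ^ 2 * s ^ 3))
          ≤ (s - 3 * m) ^ 2 * Csq := mul_le_mul_of_nonneg_left hQle (sq_nonneg _)
        _ = (C * (s - 3 * m)) ^ 2 := by rw [mul_pow, hC2]; ring
    calc Real.sqrt ((s - 3 * m) ^ 2 * ((s + 6 * m) / (27 * m ^ 2 * s ^ 3)))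
        ≤ Real.sqrt ((C * (s - 3 * m)) ^ 2) := Real.sqrt_le_sqrt hb
      _ = C * (s - 3 * m) := Real.sqrt_sq (mul_nonneg hCpos.le (by linarith))
  -- Part 1: r stays above 3m
  have h3m : ∀ l : ℝ, 0 ≤ l → 3 * m < r l := by
    by_contra hcon
    push_neg at hcon
    obtain ⟨l₁, hl₁0, hl₁⟩ := hcon
    set S : Set ℝ := Set.Icc 0 l₁ ∩ r ⁻¹' Set.Iic (3 * m) with hS_def
    have hSc : IsClosed S :=
      (hrc.mono (Set.Icc_subset_Ici_self)).preimage_isClosed_of_isClosed isClosed_Icc isClosed_Iic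
    have hSne : S.Nonempty := ⟨l₁, ⟨hl₁0, le_refl _⟩, hl₁⟩
    have hSbdd : BddBelow S := ⟨0, fun x hx => hx.1.1⟩
    set T : ℝ := sInf S with hT_def
    have hTS : T ∈ S := hSc.csInf_mem hSne hSbdd
    have hT0 : 0 ≤ T := hTS.1.1
    have hTl₁ : T ≤ l₁ := hTS.1.2
    have hrT : r T ≤ 3 * m := hTS.2
    have hTpos : 0 < T := by
      rcases hT0.lt_or_eq with h | h
      · exact h
      · exfalso; rw [← h, h0] at hrT; linarith
    have hmid : ∀ x ∈ Set.Ioo (0 : ℝ) T, 3 * m < r x := by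
      intro x hx
      by_contra hxle
      push_neg at hxle
      have hxS : x ∈ S := ⟨⟨hx.1.le, le_trans hx.2.le hTl₁⟩, hxle⟩
      exact absurd (csInf_le hSbdd hxS) (not_le.mpr hx.2)
    -- the function u = exp(C l) (r l - 3m) is monotone on [0, T]
    have hud : ∀ x : ℝ, 0 ≤ x →
        HasDerivAt (fun l => Real.exp (C * l) * (r l - 3 * m))
          (C * Real.exp (C * x) * (r x - 3 * m) +
            Real.exp (C * x) * (-Real.sqrt (1 / (27 * m ^ 2) - f (r x)))) x := by
      intro x hx
      have h1 : HasDerivAt (fun l : ℝ => C * l) C x := by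
        simpa using (hasDerivAt_id x).const_mul C
      have he : HasDerivAt (fun l : ℝ => Real.exp (C * l)) (C * Real.exp (C * x)) x := by
        simpa [mul_comm] using h1.exp
      exact he.mul ((hode x hx).sub_const (3 * m))
    have hu : MonotoneOn (fun l => Real.exp (C * l) * (r l - 3 * m)) (Set.Icc 0 T) := by
      apply monotoneOn_of_deriv_nonneg (convex_Icc 0 T)
      · exact ((Real.continuous_exp.comp (continuous_const.mul continuous_id)).continuousOn).mul
          (((hrc.mono Set.Icc_subset_Ici_self).sub continuousOn_const))
      · intro x hx
        rw [interior_Icc] at hx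
        exact ((hud x hx.1.le).differentiableAt).differentiableWithinAt
      · intro x hx
        rw [interior_Icc] at hx
        rw [(hud x hx.1.le).deriv]
        have hrx1 : 3 * m < r x := hmid x hx
        have hrx2 : r x ≤ r₀ := hle x hx.1.le
        have hs := hsqle (r x) hrx1.le hrx2
        have hexp : 0 < Real.exp (C * x) := Real.exp_pos _
        nlinarith [Real.sqrt_nonneg (1 / (27 * m ^ 2) - f (r x))]
    have h01 : (0 : ℝ) ∈ Set.Icc (0 : ℝ) T := ⟨le_refl 0, hT0⟩
    have hT1 : T ∈ Set.Icc (0 : ℝ) T := ⟨hT0, le_refl T⟩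
    have := hu h01 hT1 hT0
    simp only [mul_zero, Real.exp_zero, one_mul, h0] at this
    nlinarith [Real.exp_pos (C * T)]
  -- Part 2: strictly decreasing
  have hstrict : StrictAntiOn r (Set.Ici 0) := by
    apply strictAntiOn_of_deriv_neg (convex_Ici 0) hrc
    intro x hx
    rw [interior_Ici] at hx
    rw [(hode x hx.le).deriv]
    apply neg_lt_zero.mpr
    apply Real.sqrt_pos.mpr
    have hrx : 3 * m < r x := h3m x hx.le
    have hrx0 : 0 < r x := by linarith
    rw [key (r x) hrx0.ne']
    exact mul_pos (pow_pos (by linarith) 2)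
      (div_pos (by linarith) (mul_pos (by positivity) (pow_pos hrx0 3)))
  -- lower bound constant for Part 3
  set q₀ : ℝ := (9 * m) / (27 * m ^ 2 * r₀ ^ 3) with hq₀_def
  have hq₀pos : 0 < q₀ :=
    div_pos (by linarith) (mul_pos (by positivity) (pow_pos hR0 3))
  have hsqge : ∀ ε : ℝ, 0 < ε → ∀ s : ℝ, 3 * m + ε ≤ s → s ≤ r₀ →
      Real.sqrt (ε ^ 2 * q₀) ≤ Real.sqrt (1 / (27 * m ^ 2) - f s) := by
    intro ε hε s h1 h2
    apply Real.sqrt_le_sqrt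
    have hs0 : 0 < s := by linarith
    rw [key s hs0.ne']
    have hQge : q₀ ≤ (s + 6 * m) / (27 * m ^ 2 * s ^ 3) := by
      apply div_le_div₀ (by linarith) (by linarith) (by positivity)
      have h3 : s ^ 3 ≤ r₀ ^ 3 := pow_le_pow_left₀ (by linarith) h2 3
      nlinarith [sq_nonneg m, hm.le]
    have hε2 : ε ^ 2 ≤ (s - 3 * m) ^ 2 := pow_le_pow_left₀ hε.le (by linarith) 2
    exact mul_le_mul hε2 hQge hq₀pos.le (sq_nonneg _)
  -- Part 3: tendsto 3m
  have htend : Tendsto r atTop (nhds (3 * m)) := by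
    rw [Metric.tendsto_atTop]
    intro ε hε
    set δ : ℝ := Real.sqrt (ε ^ 2 * q₀) with hδ_def
    have hδpos : 0 < δ := Real.sqrt_pos.mpr (mul_pos (pow_pos hε 2) hq₀pos)
    refine ⟨max 1 ((r₀ - 3 * m) / δ + 1), fun n hn => ?_⟩
    have hn0 : 0 ≤ n := le_trans (by norm_num) (le_trans (le_max_left _ _) hn)
    have hn1 : (r₀ - 3 * m) / δ + 1 ≤ n := le_trans (le_max_right _ _) hn
    have h3n : 3 * m < r n := h3m n hn0
    have hlt : r n < 3 * m + ε := by
      by_contra hge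
      push_neg at hge
      have hv : AntitoneOn (fun l => r l + δ * l) (Set.Icc 0 n) := by
        apply antitoneOn_of_deriv_nonpos (convex_Icc 0 n)
        · exact (hrc.mono Set.Icc_subset_Ici_self).add
            ((continuous_const.mul continuous_id).continuousOn)
        · intro x hx
          rw [interior_Icc] at hx
          have hd : HasDerivAt (fun l => r l + δ * l)
              (-Real.sqrt (1 / (27 * m ^ 2) - f (r x)) + δ) x := by
            have h1 : HasDerivAt (fun l : ℝ => δ * l) δ x := by
              simpa using (hasDerivAt_id x).const_mul δ
            exact (hode x hx.1.le).add h1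
          exact hd.differentiableAt.differentiableWithinAt
        · intro x hx
          rw [interior_Icc] at hx
          have hd : HasDerivAt (fun l => r l + δ * l)
              (-Real.sqrt (1 / (27 * m ^ 2) - f (r x)) + δ) x := by
            have h1 : HasDerivAt (fun l : ℝ => δ * l) δ x := by
              simpa using (hasDerivAt_id x).const_mul δ
            exact (hode x hx.1.le).add h1
          rw [hd.deriv]
          have hxn : r n ≤ r x :=
            hanti (Set.mem_Ici.mpr hx.1.le) (Set.mem_Ici.mpr hn0) hx.2.le
          have hs := hsqge ε hε (r x) (by linarith) (hle x hx.1.le)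
          rw [← hδ_def] at hs
          linarith
      have h01 : (0 : ℝ) ∈ Set.Icc (0 : ℝ) n := ⟨le_refl 0, hn0⟩
      have hn2 : n ∈ Set.Icc (0 : ℝ) n := ⟨hn0, le_refl n⟩
      have hvn := hv h01 hn2 hn0
      simp only [mul_zero, add_zero, h0] at hvn
      have hδn : r₀ - 3 * m < δ * n := by
        have hlt' : (r₀ - 3 * m) / δ < n := by linarith
        calc r₀ - 3 * m = δ * ((r₀ - 3 * m) / δ) := by field_simp
          _ < δ * n := by exact mul_lt_mul_of_pos_left hlt' hδpos
      linarith
    rw [Real.dist_eq, abs_lt]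
    constructor <;> linarith
  -- Part 4: divergent angle integral
  have hint : ∫⁻ l in Set.Ioi (0 : ℝ), ENNReal.ofReal (1 / (r l) ^ 2) = ⊤ := by
    rw [eq_top_iff]
    have hc : (0 : ENNReal) < ENNReal.ofReal (1 / r₀ ^ 2) :=
      ENNReal.ofReal_pos.mpr (one_div_pos.mpr (pow_pos hR0 2))
    have hub : ∀ l ∈ Set.Ioi (0 : ℝ),
        ENNReal.ofReal (1 / r₀ ^ 2) ≤ ENNReal.ofReal (1 / (r l) ^ 2) := by
      intro l hl
      apply ENNReal.ofReal_le_ofReal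
      have h1 := h3m l (le_of_lt hl)
      have h2 := hle l (le_of_lt hl)
      have hrl : 0 < r l := by linarith
      exact one_div_le_one_div_of_le (pow_pos hrl 2) (by nlinarith)
    calc (⊤ : ENNReal) = ENNReal.ofReal (1 / r₀ ^ 2) * volume (Set.Ioi (0 : ℝ)) := by
          rw [Real.volume_Ioi, ENNReal.mul_top hc.ne']
      _ = ∫⁻ _ in Set.Ioi (0 : ℝ), ENNReal.ofReal (1 / r₀ ^ 2) :=
          (setLIntegral_const _ _).symm
      _ ≤ ∫⁻ l in Set.Ioi (0 : ℝ), ENNReal.ofReal (1 / (r l) ^ 2) :=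
          lintegral_mono_ae ((ae_restrict_mem measurableSet_Ioi).mono hub)
  exact ⟨h3m, hstrict, htend, hint⟩
end
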